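/- Let k₁, k₃ ∈ ℝ and let λ : ℝ → ℝ be twice differentiable with λ'(t) ≠ 0 for all t. Let A, B, C : ℝ → ℝ be differentiable with B(t) ≠ 0 and C(t) ≠ 0 for all t, and let Ã, B̃, C̃ : ℝ → ℝ be differentiable with Ã(λ(t)) = e^{5k₁} A(t)/λ'(t), B̃(λ(t)) = e^{3k₁} B(t)/λ'(t), C̃(λ(t)) = e^{3k₁-k₃} C(t)/λ'(t) for all t. Then for every t, Ã(λ(t)) (Ã'(λ(t)) C̃(λ(t)) − Ã(λ(t)) C̃'(λ(t)))² / (B̃(λ(t))⁵ C̃(λ(t))²) = A(t) (A'(t) C(t) − A(t) C'(t))² / (B(t)⁵ C(t)²). That is, J₂⁽¹⁾ = A(A_t C − A C_t)²/(B⁵C²) is a differential invariant of first order of the equivalence group of subclass (3). -/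

import Mathlib

set_option maxHeartbeats 2000000 in
/-- `J₂⁽¹⁾ = A(A_t C − A C_t)²/(B⁵C²)` is a first-order differential invariant of the
equivalence group of the undamped fifth-order KdV subclass (3). -/
theorem J2_first_order_invariant
    (k₁ k₃ : ℝ)
    (lam : ℝ → ℝ) (hlam : Differentiable ℝ lam)
    (hlam2 : Differentiable ℝ (deriv lam)) (hlam' : ∀ t, deriv lam t ≠ 0)
    (A B C : ℝ → ℝ) (hA : Differentiable ℝ A) (hB : Differentiable ℝ B)
    (hC : Differentiable ℝ C)
    (hBne : ∀ t, B t ≠ 0) (hCne : ∀ t, C t ≠ 0)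
    (At Bt Ct : ℝ → ℝ) (hAt : Differentiable ℝ At) (hBt : Differentiable ℝ Bt)
    (hCt : Differentiable ℝ Ct)
    (hAtr : ∀ t, At (lam t) = Real.exp (5 * k₁) * A t / deriv lam t)
    (hBtr : ∀ t, Bt (lam t) = Real.exp (3 * k₁) * B t / deriv lam t)
    (hCtr : ∀ t, Ct (lam t) = Real.exp (3 * k₁ - k₃) * C t / deriv lam t) :
    ∀ t,
      At (lam t) * (deriv At (lam t) * Ct (lam t) - At (lam t) * deriv Ct (lam t)) ^ 2
          / (Bt (lam t) ^ 5 * Ct (lam t) ^ 2)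
        = A t * (deriv A t * C t - A t * deriv C t) ^ 2 / (B t ^ 5 * C t ^ 2) := by
  intro t
  set cA := Real.exp (5 * k₁) with hcA
  set cB := Real.exp (3 * k₁) with hcB
  set cC := Real.exp (3 * k₁ - k₃) with hcC
  have hcAne : cA ≠ 0 := Real.exp_ne_zero _
  have hcBne : cB ≠ 0 := Real.exp_ne_zero _
  have hcCne : cC ≠ 0 := Real.exp_ne_zero _
  set L := deriv lam with hL
  have hLne : L t ≠ 0 := hlam' t
  -- derivative of At ∘ lam
  have hAcomp : (At ∘ lam) = fun s => cA * A s / L s := funext hAtr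
  have hCcomp : (Ct ∘ lam) = fun s => cC * C s / L s := funext hCtr
  have hdA : HasDerivAt (fun s => cA * A s / L s)
      ((cA * deriv A t * L t - cA * A t * deriv L t) / L t ^ 2) t :=
    (((hA t).hasDerivAt.const_mul cA).div (hlam2 t).hasDerivAt hLne)
  have hdC : HasDerivAt (fun s => cC * C s / L s)
      ((cC * deriv C t * L t - cC * C t * deriv L t) / L t ^ 2) t :=
    (((hC t).hasDerivAt.const_mul cC).div (hlam2 t).hasDerivAt hLne)
  have hchainA : deriv (At ∘ lam) t = deriv At (lam t) * L t :=
    deriv_comp (x := t) (hAt (lam t)) (hlam t)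
  have hchainC : deriv (Ct ∘ lam) t = deriv Ct (lam t) * L t :=
    deriv_comp (x := t) (hCt (lam t)) (hlam t)
  have hdAval : deriv At (lam t) * L t
      = (cA * deriv A t * L t - cA * A t * deriv L t) / L t ^ 2 := by
    rw [← hchainA, hAcomp, hdA.deriv]
  have hdCval : deriv Ct (lam t) * L t
      = (cC * deriv C t * L t - cC * C t * deriv L t) / L t ^ 2 := by
    rw [← hchainC, hCcomp, hdC.deriv]
  have hA' : deriv At (lam t)
      = (cA * deriv A t * L t - cA * A t * deriv L t) / L t ^ 3 := by
    rw [eq_div_iff (pow_ne_zero 3 hLne)]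
    field_simp at hdAval
    linear_combination hdAval
  have hC' : deriv Ct (lam t)
      = (cC * deriv C t * L t - cC * C t * deriv L t) / L t ^ 3 := by
    rw [eq_div_iff (pow_ne_zero 3 hLne)]
    field_simp at hdCval
    linear_combination hdCval
  rw [hAtr t, hBtr t, hCtr t, hA', hC']
  have key : cA ^ 3 = cB ^ 5 := by
    rw [hcA, hcB, ← Real.exp_nat_mul, ← Real.exp_nat_mul]
    ring_nf
  field_simp [hcAne, hcBne, hcCne, hBne t, hCne t]
  linear_combination (A t * (deriv A t * C t - A t * deriv C t) ^ 2 *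
    L t ^ 2) * key
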